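/- If the votes are v = (v_1,…,v_n) with all v_i > 0 and seat vector s ∈ ℕ₀ⁿ satisfies s_i = r(a*, A_i) for a* = A_{(k)} where r is the rank function, then Σ_{i=1}^n s_i ≥ k, and Σ_{i=1}^n |{ a ∈ A_i | a < a* }| < k; hence k − Σ_i |{a ∈ A_i | a < a*}| seats remain to be distributed among the parties tied at value a*. -/

import Mathlib

open scoped Classical

/-- The rank of `x` in the multiset `A = ⊎_i { d_j / v_i }`. -/
noncomputable def rankA {n : ℕ} (d : ℕ → ℝ) (v : Fin n → ℝ) (x : ℝ) : ℕ :=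
  ∑ i : Fin n, Nat.card {j : ℕ | d j / v i ≤ x}

/-- If `s_i = r(a*, A_i)` for `a* = A_(k)`, then `Σ s_i ≥ k`, while the number of
elements strictly below `a*` is `< k`; the difference is distributed among ties. -/
theorem seats_from_astar
    {n : ℕ} (d : ℕ → ℝ) (v : Fin n → ℝ) (k : ℕ) (astar : ℝ) (s : Fin n → ℕ)
    (hd0 : 0 ≤ d 0) (hdmono : StrictMono d) (hdunb : ∀ M : ℝ, ∃ j : ℕ, M < d j)
    (hv : ∀ i, 0 < v i) (hk : 1 ≤ k)
    -- `astar` is the k-th smallest element of `A` (counting multiplicity)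
    (hastar_mem : ∃ i : Fin n, ∃ j : ℕ, d j / v i = astar)
    (hastar_rank : k ≤ rankA d v astar)
    (hastar_min : ∀ y : ℝ, y < astar → rankA d v y < k)
    (hs : ∀ i, s i = Nat.card {j : ℕ | d j / v i ≤ astar}) :
    k ≤ ∑ i : Fin n, s i ∧
    (∑ i : Fin n, Nat.card {j : ℕ | d j / v i < astar}) < k := by
  have hfin : ∀ (i : Fin n) (x : ℝ), {j : ℕ | d j / v i ≤ x}.Finite := by
    intro i x
    obtain ⟨j0, hj0⟩ := hdunb (x * v i)
    apply (Set.finite_Iio j0).subset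
    intro j hj
    have h1 : d j ≤ x * v i := (div_le_iff₀ (hv i)).1 hj
    exact hdmono.lt_iff_lt.1 (lt_of_le_of_lt h1 hj0)
  constructor
  · calc k ≤ rankA d v astar := hastar_rank
      _ = ∑ i : Fin n, s i := by
        unfold rankA; exact Finset.sum_congr rfl fun i _ => (hs i).symm
  · -- strict counts
    by_cases hE : ∃ (i : Fin n) (j : ℕ), d j / v i < astar
    · -- there is an element strictly below astar; take y = max such element
      obtain ⟨i0, j0, hij0⟩ := hE
      -- the set of strict elements is finite (as a set of pairs in a bounded range)
      have hfinE : ∀ i : Fin n, {j : ℕ | d j / v i < astar}.Finite := fun i =>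
        (hfin i astar).subset fun j hj => le_of_lt (Set.mem_setOf_eq ▸ hj)
      -- collect values
      set V : Set ℝ := {a : ℝ | a < astar ∧ ∃ (i : Fin n) (j : ℕ), d j / v i = a}
      have hVfin : V.Finite := by
        have : V ⊆ ⋃ i : Fin n, (fun j => d j / v i) '' {j : ℕ | d j / v i < astar} := by
          rintro a ⟨ha, i, j, rfl⟩
          exact Set.mem_iUnion.2 ⟨i, ⟨j, ha, rfl⟩⟩
        exact (Set.finite_iUnion fun i => (hfinE i).image _).subset this
      have hVne : V.Nonempty := ⟨d j0 / v i0, hij0, i0, j0, rfl⟩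
      obtain ⟨y, hyV, hymax⟩ : ∃ y ∈ V, ∀ a ∈ V, id y ≤ id a → id y = id a := by
        obtain ⟨y, hyV, hymax⟩ := Set.Finite.exists_maximal hVfin hVne
        exact ⟨y, hyV, fun a ha h => le_antisymm h (hymax ha h)⟩
      have hy : y < astar := hyV.1
      have hle : ∀ i : Fin n, Nat.card {j : ℕ | d j / v i < astar}
          ≤ Nat.card {j : ℕ | d j / v i ≤ y} := by
        intro i
        apply Nat.card_mono (hfin i y)
        intro j hj
        have hmem : d j / v i ∈ V := ⟨hj, i, j, rfl⟩
        by_contra hgt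
        simp only [Set.mem_setOf_eq, not_le] at hgt
        exact absurd (hymax _ hmem hgt.le) hgt.ne
      calc ∑ i : Fin n, Nat.card {j : ℕ | d j / v i < astar}
          ≤ ∑ i : Fin n, Nat.card {j : ℕ | d j / v i ≤ y} :=
            Finset.sum_le_sum fun i _ => hle i
        _ = rankA d v y := rfl
        _ < k := hastar_min y hy
    · push_neg at hE
      have : ∀ i : Fin n, {j : ℕ | d j / v i < astar} = ∅ := by
        intro i; ext j; simp [not_lt.2 (hE i j)]
      simp only [this, Nat.card_eq_fintype_card]
      simp
      omega
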